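/- For all real A with 0 ≤ A < 1, Σ_{k≥1} (Σ_{ℓ=1}^{k+1} 1/(ℓ(k+2−ℓ)) − 1/(k+2)) A^{k/2} ≤ (2/3) · √A/(1 − √A). -/

import Mathlib

lemma harm_bound (m : ℕ) : (∑ l ∈ Finset.Icc 1 (m+2), (1:ℝ)/l) ≤ ((m:ℝ)+3)/3 + 1/2 := by
  induction m with
  | zero =>
      rw [show (0:ℕ)+2 = 1+1 from rfl, Finset.sum_Icc_succ_top (by omega)]
      norm_num
  | succ n ih =>
      rw [show n+1+2 = (n+2)+1 by ring, Finset.sum_Icc_succ_top (by omega)]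
      have hn : (0:ℝ) ≤ (n:ℝ) := Nat.cast_nonneg n
      have h1 : (1:ℝ)/((n:ℝ)+2+1) ≤ 1/3 := by
        apply one_div_le_one_div_of_le
        · norm_num
        · linarith
      push_cast
      push_cast at ih
      linarith

lemma sum_refl (k : ℕ) : ∑ l ∈ Finset.Icc 1 (k+2), (1:ℝ)/((k+3-l : ℕ) : ℝ)
    = ∑ l ∈ Finset.Icc 1 (k+2), (1:ℝ)/l := by
  apply Finset.sum_nbij' (fun l => k+3-l) (fun l => k+3-l)
  all_goals intro a ha; simp only [Finset.mem_Icc] at ha ⊢ <;> omega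

lemma sum_eq (k : ℕ) : ∑ l ∈ Finset.Icc 1 (k+2), (1:ℝ)/((l:ℝ) * ((k+3-l : ℕ) : ℝ))
    = 2/((k:ℝ)+3) * ∑ l ∈ Finset.Icc 1 (k+2), (1:ℝ)/l := by
  have key : ∀ l ∈ Finset.Icc 1 (k+2), (1:ℝ)/((l:ℝ) * ((k+3-l : ℕ) : ℝ))
      = 1/((k:ℝ)+3) * ((1:ℝ)/l + (1:ℝ)/((k+3-l : ℕ) : ℝ)) := by
    intro l hl
    simp only [Finset.mem_Icc] at hl
    have h1 : ((k+3-l : ℕ) : ℝ) = (k:ℝ)+3-(l:ℝ) := by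
      push_cast [Nat.cast_sub (by omega : l ≤ k+3)]
      ring
    have hl0 : (0:ℝ) < l := by exact_mod_cast hl.1
    have hr0 : (0:ℝ) < (k:ℝ)+3-(l:ℝ) := by
      have : (l:ℝ) ≤ (k:ℝ)+2 := by exact_mod_cast hl.2
      linarith
    rw [h1]
    field_simp
    ring
  rw [Finset.sum_congr rfl key, ← Finset.mul_sum, Finset.sum_add_distrib, sum_refl]
  ring

lemma coeff_le (k : ℕ) :
    (∑ l ∈ Finset.Icc 1 (k + 2), (1 : ℝ) / ((l : ℝ) * ((k + 3 - l : ℕ) : ℝ))) -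
            1 / ((k : ℝ) + 3) ≤ 2/3 := by
  rw [sum_eq]
  have h := harm_bound k
  have hk : (0:ℝ) < (k:ℝ)+3 := by positivity
  have h3 := mul_le_mul_of_nonneg_left h (show (0:ℝ) ≤ 2/((k:ℝ)+3) by positivity)
  have h2 : 2/((k:ℝ)+3) * (((k:ℝ)+3)/3 + 1/2) = 2/3 + 1/((k:ℝ)+3) := by
    field_simp
  linarith

lemma coeff_nonneg (k : ℕ) :
    0 ≤ (∑ l ∈ Finset.Icc 1 (k + 2), (1 : ℝ) / ((l : ℝ) * ((k + 3 - l : ℕ) : ℝ))) -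
            1 / ((k : ℝ) + 3) := by
  have h1 : (1:ℝ)/((k:ℝ)+3) ≤ (1:ℝ)/(((1:ℕ):ℝ) * ((k+3-1 : ℕ) : ℝ)) := by
    rw [Nat.cast_one, one_mul, show k+3-1 = k+2 from rfl]
    apply one_div_le_one_div_of_le
    · push_cast; linarith [Nat.cast_nonneg (α := ℝ) k]
    · push_cast; norm_num
  have h2 : (1:ℝ)/(((1:ℕ):ℝ) * ((k+3-1 : ℕ) : ℝ)) ≤
      ∑ l ∈ Finset.Icc 1 (k + 2), (1 : ℝ) / ((l : ℝ) * ((k + 3 - l : ℕ) : ℝ)) := by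
    exact Finset.single_le_sum (f := fun l : ℕ => (1:ℝ)/((l:ℝ) * ((k+3-l : ℕ) : ℝ)))
      (fun i _ => by positivity) (show 1 ∈ Finset.Icc 1 (k+2) by simp)
  linarith

theorem stmt16 (A : ℝ) (hA0 : 0 ≤ A) (hA1 : A < 1) :
    (∑' k : ℕ,
        ((∑ l ∈ Finset.Icc 1 (k + 2), (1 : ℝ) / ((l : ℝ) * ((k + 3 - l : ℕ) : ℝ))) -
            1 / ((k : ℝ) + 3)) * A ^ (((k : ℝ) + 1) / 2)) ≤
      2 / 3 * (Real.sqrt A / (1 - Real.sqrt A)) := by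
  set s := Real.sqrt A with hs
  have hs0 : 0 ≤ s := Real.sqrt_nonneg A
  have hs1 : s < 1 := by
    have := Real.sqrt_lt_sqrt hA0 hA1
    simpa [hs] using this
  have hpow : ∀ k : ℕ, A ^ (((k:ℝ)+1)/2) = s ^ (k+1) := by
    intro k
    rw [hs, Real.sqrt_eq_rpow, ← Real.rpow_natCast (A ^ ((1:ℝ)/2)) (k+1),
      ← Real.rpow_mul hA0]
    congr 1
    push_cast
    ring
  have hgeom : Summable (fun k : ℕ => s ^ k) := summable_geometric_of_lt_one hs0 hs1
  have hsum2 : Summable (fun k : ℕ => (2/3:ℝ) * s ^ (k+1)) := by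
    simpa [pow_succ, mul_assoc, mul_comm, mul_left_comm] using (hgeom.mul_left ((2/3:ℝ)*s))
  have hle : ∀ k : ℕ,
      ((∑ l ∈ Finset.Icc 1 (k + 2), (1 : ℝ) / ((l : ℝ) * ((k + 3 - l : ℕ) : ℝ))) -
            1 / ((k : ℝ) + 3)) * A ^ (((k : ℝ) + 1) / 2) ≤ (2/3:ℝ) * s ^ (k+1) := by
    intro k
    rw [hpow k]
    exact mul_le_mul_of_nonneg_right (coeff_le k) (pow_nonneg hs0 _)
  have hnn : ∀ k : ℕ, 0 ≤
      ((∑ l ∈ Finset.Icc 1 (k + 2), (1 : ℝ) / ((l : ℝ) * ((k + 3 - l : ℕ) : ℝ))) -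
            1 / ((k : ℝ) + 3)) * A ^ (((k : ℝ) + 1) / 2) := by
    intro k
    exact mul_nonneg (coeff_nonneg k) (Real.rpow_nonneg hA0 _)
  have hsum1 : Summable (fun k : ℕ =>
      ((∑ l ∈ Finset.Icc 1 (k + 2), (1 : ℝ) / ((l : ℝ) * ((k + 3 - l : ℕ) : ℝ))) -
            1 / ((k : ℝ) + 3)) * A ^ (((k : ℝ) + 1) / 2)) :=
    Summable.of_nonneg_of_le hnn hle hsum2
  calc (∑' k : ℕ,
        ((∑ l ∈ Finset.Icc 1 (k + 2), (1 : ℝ) / ((l : ℝ) * ((k + 3 - l : ℕ) : ℝ))) -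
            1 / ((k : ℝ) + 3)) * A ^ (((k : ℝ) + 1) / 2))
      ≤ ∑' k : ℕ, (2/3:ℝ) * s ^ (k+1) := Summable.tsum_le_tsum hle hsum1 hsum2
    _ = 2 / 3 * (s / (1 - s)) := by
        have : ∀ k : ℕ, (2/3:ℝ) * s ^ (k+1) = ((2/3:ℝ)*s) * s ^ k := by
          intro k; ring
        rw [tsum_congr this, tsum_mul_left, tsum_geometric_of_lt_one hs0 hs1]
        field_simp
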